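/- Let A_i = XP_N(p_i|x_i|z_i) for i < r be XP operators with binary x-components and let m : Fin n → Fin 2 be a bit string. Then there exists q : Finset (Fin r) → ℤ such that for every u : Fin r → Fin 2, (A₀^(u 0) * ⋯ * A_{r−1}^(u (r−1))).mulVec |m⟩ = ω^(f u) • |m ⊕ s_u⟩, where s_u is the componentwise mod-2 sum of the x_i over those i with u i = 1, and f u = ∑ over nonempty subsets s of Fin r of q s * 2^(s.card − 1) * ∏_{j ∈ s} (u j : ℤ). Moreover, if N = 2^t then q can be chosen to vanish on all subsets s with s.card > t + 1; that is, the phase function of any precision-2^t XP stabiliser state is a polynomial of degree at most t+1 in the orbit variables. -/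

import Mathlib

open Matrix Fin.NatCast

/-- `ω = exp(πi/N)`. -/
noncomputable def omN (N : ℕ) : ℂ := Complex.exp (Real.pi * Complex.I / N)

/-- The Pauli X matrix. -/
def Xm : Matrix (Fin 2) (Fin 2) ℂ := !![0, 1; 1, 0]

/-- The precision-`N` phase matrix `P = diag(1, ω²)`. -/
noncomputable def Pm (N : ℕ) : Matrix (Fin 2) (Fin 2) ℂ := !![1, 0; 0, (omN N) ^ 2]

/-- The precision-`N` XP operator `XP_N(p|x|z)` on `n` qubits, the matrix indexed by bit
strings whose `(f, e)` entry is `ω^p * ∏ i, (X^(x i) * P^(z i)) (f i) (e i)`. -/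
noncomputable def XP (N n : ℕ) (p : ℤ) (x z : Fin n → ℤ) :
    Matrix (Fin n → Fin 2) (Fin n → Fin 2) ℂ :=
  Matrix.of fun f e => (omN N) ^ p * ∏ i, ((Xm ^ (x i)) * (Pm N) ^ (z i)) (f i) (e i)

/-- The antisymmetric operator `D_N(z) = XP_N(∑ i, z i | 0 | -z)`. -/
noncomputable def DN (N n : ℕ) (z : Fin n → ℤ) :
    Matrix (Fin n → Fin 2) (Fin n → Fin 2) ℂ :=
  XP N n (∑ i, z i) 0 (-z)

/-- A vector is binary if every entry is 0 or 1. -/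
def IsBinary {n : ℕ} (x : Fin n → ℤ) : Prop := ∀ i, x i = 0 ∨ x i = 1

lemma omN_ne_zero (N : ℕ) : omN N ≠ 0 := Complex.exp_ne_zero _

lemma omN_pow_2N {N : ℕ} (hN : N ≠ 0) : omN N ^ (2 * (N:ℤ)) = 1 := by
  have h : ((2 * (N:ℤ) : ℤ) : ℂ) * (Real.pi * Complex.I / N) = 2 * Real.pi * Complex.I := by
    have : (N : ℂ) ≠ 0 := Nat.cast_ne_zero.mpr hN
    field_simp
    push_cast
    ring
  rw [omN, ← Complex.exp_int_mul, h, Complex.exp_two_pi_mul_I]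

lemma Dmul (N : ℕ) (a b : ℤ) :
    !![1, 0; 0, omN N ^ a] * !![1, 0; 0, omN N ^ b] = !![1, 0; 0, omN N ^ (a + b)] := by
  rw [Matrix.mul_fin_two, zpow_add₀ (omN_ne_zero N)]
  norm_num

lemma Pm_pow_nat (N : ℕ) (k : ℕ) : Pm N ^ k = !![1, 0; 0, omN N ^ (2 * (k:ℤ))] := by
  induction k with
  | zero => rw [pow_zero]; norm_num; rw [Matrix.one_fin_two]
  | succ k ih =>
      have hPm : Pm N = !![1, 0; 0, omN N ^ (2:ℤ)] := by
        rw [Pm, ← zpow_natCast (omN N) 2]; norm_num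
      rw [pow_succ, ih, hPm, Dmul]
      norm_num
      ring_nf
lemma Pm_zpow (N : ℕ) (z : ℤ) : (Pm N) ^ z = !![1, 0; 0, omN N ^ (2 * z)] := by
  cases z with
  | ofNat k =>
      rw [Int.ofNat_eq_coe, zpow_natCast, Pm_pow_nat]
  | negSucc k =>
      rw [zpow_negSucc, Pm_pow_nat]
      apply Matrix.inv_eq_right_inv
      rw [Dmul]
      norm_num
      rw [show (2 * ((k:ℤ)+1) + 2 * Int.negSucc k) = 0 by rw [Int.negSucc_eq]; ring]
      norm_num
      rw [Matrix.one_fin_two]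

lemma omN_zpow_prod {ι : Type*} (N : ℕ) (s : Finset ι) (e : ι → ℤ) :
    ∏ i ∈ s, omN N ^ e i = omN N ^ (∑ i ∈ s, e i) := by
  classical
  induction s using Finset.induction_on with
  | empty => simp
  | insert a s h ih => rw [Finset.prod_insert h, Finset.sum_insert h, ih, zpow_add₀ (omN_ne_zero N)]

lemma XPentry (N : ℕ) (xx zz : ℤ) (hxx : xx = 0 ∨ xx = 1) (a b : Fin 2) :
    ((Xm ^ xx) * (Pm N) ^ zz) a b
      = (if a = b + ((xx.toNat : ℕ) : Fin 2) then 1 else 0) * omN N ^ (2 * zz * (b.val : ℤ)) := by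
  rw [Pm_zpow]
  rcases hxx with h | h <;> subst h
  · rw [zpow_zero, Matrix.one_mul]
    fin_cases a <;> fin_cases b <;>
      simp [Matrix.cons_val_zero, Matrix.cons_val_one] <;> norm_num
  · rw [zpow_one, Xm, Matrix.mul_fin_two]
    fin_cases a <;> fin_cases b <;>
      simp [Matrix.cons_val_zero, Matrix.cons_val_one] <;> norm_num

lemma XP_mulVec (N n : ℕ) (p : ℤ) (x z : Fin n → ℤ) (hx : IsBinary x) (m : Fin n → Fin 2) :
    (XP N n p x z) *ᵥ Pi.single m 1
      = omN N ^ (p + 2 * ∑ k, z k * ((m k).val : ℤ)) •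
        (Pi.single (fun k => m k + (((x k).toNat : ℕ) : Fin 2)) 1 : (Fin n → Fin 2) → ℂ) := by
  classical
  funext f
  rw [mulVec_single, Pi.smul_apply, col_apply, MulOpposite.op_one, one_smul]
  have hE : ∀ k : Fin n, ((Xm ^ (x k)) * (Pm N) ^ (z k)) (f k) (m k)
      = (if f k = m k + (((x k).toNat : ℕ) : Fin 2) then 1 else 0)
        * omN N ^ (2 * z k * ((m k).val : ℤ)) := fun k => XPentry N (x k) (z k) (hx k) _ _
  rw [XP]
  simp only [Matrix.of_apply]
  rw [Finset.prod_congr rfl (fun k _ => hE k), Finset.prod_mul_distrib, omN_zpow_prod]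
  have hif : (∏ k, if f k = m k + (((x k).toNat : ℕ) : Fin 2) then (1:ℂ) else 0)
      = if f = (fun k => m k + (((x k).toNat : ℕ) : Fin 2)) then 1 else 0 := by
    by_cases h : f = fun k => m k + (((x k).toNat : ℕ) : Fin 2)
    · rw [if_pos h]
      apply Finset.prod_eq_one
      intro k _
      rw [if_pos (congrFun h k)]
    · rw [if_neg h]
      obtain ⟨k, hk⟩ := Function.ne_iff.mp h
      exact Finset.prod_eq_zero (Finset.mem_univ k) (if_neg hk)
  rw [hif, Pi.smul_apply, Pi.single_apply, smul_eq_mul]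
  have hsum : (∑ k, 2 * z k * ((m k).val : ℤ)) = 2 * ∑ k, z k * ((m k).val : ℤ) := by
    rw [Finset.mul_sum]; exact Finset.sum_congr rfl fun k _ => by ring
  rw [hsum, zpow_add₀ (omN_ne_zero N)]
  by_cases h : f = fun k => m k + (((x k).toNat : ℕ) : Fin 2)
  · rw [if_pos h]; ring
  · rw [if_neg h]; ring

lemma XP_pow_mulVec (N n : ℕ) (p : ℤ) (x z : Fin n → ℤ) (hx : IsBinary x) (m : Fin n → Fin 2)
    (u : Fin 2) :
    (XP N n p x z ^ (u.val)) *ᵥ Pi.single m 1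
      = omN N ^ ((u.val : ℤ) * (p + 2 * ∑ k, z k * ((m k).val : ℤ))) •
        (Pi.single (fun k => m k + ((u.val * (x k).toNat : ℕ) : Fin 2)) 1 :
          (Fin n → Fin 2) → ℂ) := by
  fin_cases u
  · simp only [pow_zero, Matrix.one_mulVec]
    norm_num
  · simp only [pow_one]
    rw [XP_mulVec N n p x z hx m]
    norm_num

def Sstate {n r : ℕ} (x : Fin r → Fin n → ℤ) (m : Fin n → Fin 2) (L : List (Fin r))
    (u : Fin r → Fin 2) : Fin n → Fin 2 :=
  fun k => m k + (((L.map fun j => (u j).val * (x j k).toNat).sum : ℕ) : Fin 2)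

def Phi {n r : ℕ} (p : Fin r → ℤ) (x z : Fin r → Fin n → ℤ) (m : Fin n → Fin 2) :
    List (Fin r) → (Fin r → Fin 2) → ℤ
  | [], _ => 0
  | i :: L, u =>
      (u i).val * (p i + 2 * ∑ k, z i k * ((Sstate x m L u k).val : ℤ)) + Phi p x z m L u

lemma Sstate_cons {n r : ℕ} (x : Fin r → Fin n → ℤ) (m : Fin n → Fin 2) (j : Fin r)
    (L : List (Fin r)) (u : Fin r → Fin 2) :
    Sstate x m (j :: L) u
      = fun k => Sstate x m L u k + (((u j).val * (x j k).toNat : ℕ) : Fin 2) := by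
  funext k
  simp only [Sstate, List.map_cons, List.sum_cons, Nat.cast_add]
  abel

lemma prod_mulVec (N n r : ℕ) (p : Fin r → ℤ) (x z : Fin r → Fin n → ℤ)
    (hx : ∀ i, IsBinary (x i)) (m : Fin n → Fin 2) (u : Fin r → Fin 2) (L : List (Fin r)) :
    ((L.map fun i => XP N n (p i) (x i) (z i) ^ ((u i).val)).prod) *ᵥ Pi.single m 1
      = omN N ^ (Phi p x z m L u) •
        (Pi.single (Sstate x m L u) 1 : (Fin n → Fin 2) → ℂ) := by
  induction L with
  | nil =>
      simp only [List.map_nil, List.prod_nil, Matrix.one_mulVec, Phi]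
      have : Sstate x m [] u = m := by funext k; simp [Sstate]
      rw [this, zpow_zero, one_smul]
  | cons i L ih =>
      rw [List.map_cons, List.prod_cons, ← Matrix.mulVec_mulVec, ih, Matrix.mulVec_smul,
        XP_pow_mulVec N n (p i) (x i) (z i) (hx i) (Sstate x m L u) (u i),
        smul_smul, ← zpow_add₀ (omN_ne_zero N), Sstate_cons, Phi]
      ring_nf

def Gq (r : ℕ) : AddSubgroup ((Fin r → Fin 2) → ℤ) :=
  AddSubgroup.closure {h | ∃ s : Finset (Fin r), s.Nonempty ∧
    h = fun u => 2 ^ (s.card - 1) * ∏ j ∈ s, ((u j).val : ℤ)}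

lemma gen_mem {r : ℕ} (s : Finset (Fin r)) (hs : s.Nonempty) :
    (fun u => (2:ℤ) ^ (s.card - 1) * ∏ j ∈ s, ((u j).val : ℤ)) ∈ Gq r :=
  AddSubgroup.subset_closure ⟨s, hs, rfl⟩

lemma val_sq (a : Fin 2) : ((a.val : ℤ)) * (a.val : ℤ) = (a.val : ℤ) := by
  fin_cases a <;> norm_num

lemma mul2_mem {r : ℕ} (j : Fin r) {h : (Fin r → Fin 2) → ℤ} (hh : h ∈ Gq r) :
    (fun u => 2 * ((u j).val : ℤ) * h u) ∈ Gq r := by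
  classical
  induction hh using AddSubgroup.closure_induction with
  | mem g hg =>
      obtain ⟨s, hs, rfl⟩ := hg
      by_cases hj : j ∈ s
      · have mem2 : ((2:ℤ) • fun u : Fin r → Fin 2 =>
            (2:ℤ) ^ (s.card - 1) * ∏ i ∈ s, ((u i).val : ℤ)) ∈ Gq r :=
          AddSubgroup.zsmul_mem _ (gen_mem s hs) 2
        convert mem2 using 1
        funext u
        have hp : ((u j).val : ℤ) * ∏ i ∈ s, ((u i).val : ℤ) = ∏ i ∈ s, ((u i).val : ℤ) := by
          rw [← Finset.mul_prod_erase s _ hj, ← mul_assoc, val_sq]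
        simp only [Pi.smul_apply, smul_eq_mul]
        calc 2 * ((u j).val : ℤ) * ((2:ℤ) ^ (s.card - 1) * ∏ i ∈ s, ((u i).val : ℤ))
            = 2 * ((2:ℤ) ^ (s.card - 1) * (((u j).val : ℤ) * ∏ i ∈ s, ((u i).val : ℤ))) := by
              ring
          _ = 2 * ((2:ℤ) ^ (s.card - 1) * ∏ i ∈ s, ((u i).val : ℤ)) := by rw [hp]
      · have mem2 := gen_mem _ (Finset.insert_nonempty j s)
        convert mem2 using 1
        funext u
        have hcard : (insert j s).card - 1 = s.card := by
          rw [Finset.card_insert_of_notMem hj]; omega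
        have h1 : s.card - 1 + 1 = s.card := Nat.succ_pred_eq_of_pos (Finset.card_pos.mpr hs)
        have h2 := pow_succ' (2:ℤ) (s.card - 1)
        rw [h1] at h2
        rw [Finset.prod_insert hj, hcard, h2]
        ring
  | zero => simp only [Pi.zero_apply, mul_zero]; exact AddSubgroup.zero_mem (Gq r)
  | add g1 g2 h1 h2 ih1 ih2 =>
      have heq : (fun u => 2 * ((u j).val : ℤ) * (g1 + g2) u)
          = (fun u => 2 * ((u j).val : ℤ) * g1 u) + (fun u => 2 * ((u j).val : ℤ) * g2 u) := by
        funext u; simp only [Pi.add_apply]; ring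
      rw [heq]; exact AddSubgroup.add_mem _ ih1 ih2
  | neg g hg ih =>
      have heq : (fun u => 2 * ((u j).val : ℤ) * (-g) u)
          = -(fun u => 2 * ((u j).val : ℤ) * g u) := by
        funext u; simp only [Pi.neg_apply]; ring
      rw [heq]; exact AddSubgroup.neg_mem _ ih

lemma fin2_val_add (a b : Fin 2) :
    (((a + b).val : ℤ)) = (a.val : ℤ) + (b.val : ℤ) - 2 * (a.val : ℤ) * (b.val : ℤ) := by
  fin_cases a <;> fin_cases b <;> decide

lemma key_mem {n r : ℕ} (x : Fin r → Fin n → ℤ) (hx : ∀ i, IsBinary (x i))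
    (m : Fin n → Fin 2) (i : Fin r) (k : Fin n) (L : List (Fin r)) :
    (fun u => 2 * ((u i).val : ℤ) * ((Sstate x m L u k).val : ℤ)) ∈ Gq r := by
  classical
  induction L with
  | nil =>
      have mem2 : (((2:ℤ) * ((m k).val : ℤ)) •
          fun u : Fin r → Fin 2 => (2:ℤ) ^ (({i} : Finset (Fin r)).card - 1)
            * ∏ j ∈ ({i} : Finset (Fin r)), ((u j).val : ℤ)) ∈ Gq r :=
        AddSubgroup.zsmul_mem _ (gen_mem {i} (Finset.singleton_nonempty i)) _
      convert mem2 using 1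
      funext u
      simp only [Pi.smul_apply, smul_eq_mul, Finset.card_singleton, Finset.prod_singleton,
        Sstate, List.map_nil, List.sum_nil, Nat.cast_zero, add_zero, pow_zero]
      ring
  | cons j L ih =>
      rcases hx j k with hc | hc
      · have : (fun u => 2 * ((u i).val : ℤ) * ((Sstate x m (j :: L) u k).val : ℤ))
            = fun u => 2 * ((u i).val : ℤ) * ((Sstate x m L u k).val : ℤ) := by
          funext u
          simp only [Sstate_cons, hc]
          norm_num
        rw [this]; exact ih
      · have hstate : ∀ u : Fin r → Fin 2, Sstate x m (j :: L) u k = Sstate x m L u k + u j := by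
          intro u
          simp only [Sstate_cons, hc]
          norm_num [Fin.cast_val_eq_self]
        have h2 : (fun u : Fin r → Fin 2 => 2 * ((u j).val : ℤ) *
            ((2:ℤ) ^ (({i} : Finset (Fin r)).card - 1)
              * ∏ j' ∈ ({i} : Finset (Fin r)), ((u j').val : ℤ))) ∈ Gq r :=
          mul2_mem j (gen_mem {i} (Finset.singleton_nonempty i))
        have h3 : (fun u : Fin r → Fin 2 => 2 * ((u j).val : ℤ) *
            (2 * ((u i).val : ℤ) * ((Sstate x m L u k).val : ℤ))) ∈ Gq r :=
          mul2_mem j ih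
        have heq : (fun u => 2 * ((u i).val : ℤ) * ((Sstate x m (j :: L) u k).val : ℤ))
            = (fun u : Fin r → Fin 2 => 2 * ((u i).val : ℤ) * ((Sstate x m L u k).val : ℤ))
              + (fun u : Fin r → Fin 2 => 2 * ((u j).val : ℤ) *
                  ((2:ℤ) ^ (({i} : Finset (Fin r)).card - 1)
                    * ∏ j' ∈ ({i} : Finset (Fin r)), ((u j').val : ℤ)))
              - (fun u : Fin r → Fin 2 => 2 * ((u j).val : ℤ) *
                  (2 * ((u i).val : ℤ) * ((Sstate x m L u k).val : ℤ))) := by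
          funext u
          simp only [Pi.add_apply, Pi.sub_apply, Finset.card_singleton, Finset.prod_singleton,
            pow_zero]
          rw [hstate u, fin2_val_add]
          ring
        rw [heq]
        exact AddSubgroup.sub_mem _ (AddSubgroup.add_mem _ ih h2) h3

lemma Phi_mem {n r : ℕ} (p : Fin r → ℤ) (x z : Fin r → Fin n → ℤ)
    (hx : ∀ i, IsBinary (x i)) (m : Fin n → Fin 2) (L : List (Fin r)) :
    (fun u => Phi p x z m L u) ∈ Gq r := by
  classical
  induction L with
  | nil => simp only [Phi]; exact AddSubgroup.zero_mem (Gq r)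
  | cons i L ih =>
      have h1 : (fun u : Fin r → Fin 2 => ((u i).val : ℤ) * p i) ∈ Gq r := by
        have mem2 : ((p i) • fun u : Fin r → Fin 2 =>
            (2:ℤ) ^ (({i} : Finset (Fin r)).card - 1)
              * ∏ j ∈ ({i} : Finset (Fin r)), ((u j).val : ℤ)) ∈ Gq r :=
          AddSubgroup.zsmul_mem _ (gen_mem {i} (Finset.singleton_nonempty i)) _
        convert mem2 using 1
        funext u
        simp only [Pi.smul_apply, smul_eq_mul, Finset.card_singleton, Finset.prod_singleton,
          pow_zero]
        ring
      have h2 : ∀ k : Fin n, (fun u : Fin r → Fin 2 =>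
          z i k * (2 * ((u i).val : ℤ) * ((Sstate x m L u k).val : ℤ))) ∈ Gq r := by
        intro k
        have := AddSubgroup.zsmul_mem _ (key_mem x hx m i k L) (z i k)
        convert this using 1
        funext u; rfl
      have h3 : (fun u : Fin r → Fin 2 =>
          ∑ k, z i k * (2 * ((u i).val : ℤ) * ((Sstate x m L u k).val : ℤ))) ∈ Gq r := by
        have := AddSubgroup.sum_mem (Gq r)
          (fun k (_ : k ∈ (Finset.univ : Finset (Fin n))) => h2 k)
        convert this using 1
        funext u
        rw [Finset.sum_apply]
      have heq : (fun u => Phi p x z m (i :: L) u)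
          = (fun u : Fin r → Fin 2 => ((u i).val : ℤ) * p i)
            + (fun u : Fin r → Fin 2 =>
                ∑ k, z i k * (2 * ((u i).val : ℤ) * ((Sstate x m L u k).val : ℤ)))
            + (fun u => Phi p x z m L u) := by
        funext u
        simp only [Pi.add_apply, Phi]
        congr 1
        rw [mul_add]
        congr 1
        rw [Finset.mul_sum, Finset.mul_sum]
        exact Finset.sum_congr rfl fun k _ => by ring
      rw [heq]
      exact AddSubgroup.add_mem _ (AddSubgroup.add_mem _ h1 h3) ih

lemma Gq_form {r : ℕ} {h : (Fin r → Fin 2) → ℤ} (hh : h ∈ Gq r) :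
    ∃ q : Finset (Fin r) → ℤ, ∀ u,
      h u = ∑ s ∈ Finset.univ.powerset.filter (fun s : Finset (Fin r) => s.Nonempty),
        q s * 2 ^ (s.card - 1) * ∏ j ∈ s, ((u j).val : ℤ) := by
  classical
  induction hh using AddSubgroup.closure_induction with
  | mem g hg =>
      obtain ⟨s, hs, rfl⟩ := hg
      refine ⟨fun s' => if s' = s then 1 else 0, fun u => ?_⟩
      rw [Finset.sum_eq_single s]
      · simp
      · intro s' hs' hne
        simp [hne]
      · intro hmem
        exact absurd (Finset.mem_filter.mpr ⟨Finset.mem_powerset.mpr (Finset.subset_univ s), hs⟩)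
          hmem
  | zero => exact ⟨0, fun u => by simp⟩
  | add g1 g2 h1 h2 ih1 ih2 =>
      obtain ⟨q1, hq1⟩ := ih1
      obtain ⟨q2, hq2⟩ := ih2
      refine ⟨q1 + q2, fun u => ?_⟩
      simp only [Pi.add_apply, hq1 u, hq2 u, ← Finset.sum_add_distrib]
      exact Finset.sum_congr rfl fun s _ => by ring
  | neg g hg ih =>
      obtain ⟨q, hq⟩ := ih
      refine ⟨-q, fun u => ?_⟩
      simp only [Pi.neg_apply, hq u, ← Finset.sum_neg_distrib]
      exact Finset.sum_congr rfl fun s _ => by ring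


/-- **Phase functions of XP stabiliser states**: for XP operators `A_i = XP_N(p_i|x_i|z_i)`
with binary x-components and a bit string `m`, there is `q : Finset (Fin r) → ℤ` with
`(∏_i A_i^{u i})|m⟩ = ω^(f u) |m ⊕ s_u⟩` where
`f u = ∑_{∅ ≠ s} q s ⬝ 2^(|s|−1) ∏_{j ∈ s} u_j`; moreover if `N = 2^t` then `q` can be chosen
to vanish on all subsets of size `> t+1`, i.e. the phase function has degree at most `t+1`. -/
theorem XP_phase_function (N n r : ℕ) (hN : 2 ≤ N) (hn : 1 ≤ n)
    (p : Fin r → ℤ) (x z : Fin r → Fin n → ℤ)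
    (hx : ∀ i, IsBinary (x i)) (m : Fin n → Fin 2) :
    (∃ q : Finset (Fin r) → ℤ, ∀ u : Fin r → Fin 2,
        ((List.ofFn fun i => XP N n (p i) (x i) (z i) ^ (u i : ℕ)).prod).mulVec
            (Pi.single m 1) =
          (omN N) ^ (∑ s ∈ Finset.univ.powerset.filter (fun s : Finset (Fin r) => s.Nonempty),
              q s * 2 ^ (s.card - 1) * ∏ j ∈ s, ((u j : ℕ) : ℤ)) •
            (Pi.single (fun j => m j + ((∑ i, (u i : ℕ) * (x i j).toNat : ℕ) : Fin 2)) 1 :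
              (Fin n → Fin 2) → ℂ)) ∧
      ∀ t : ℕ, N = 2 ^ t →
        ∃ q : Finset (Fin r) → ℤ, (∀ s : Finset (Fin r), t + 1 < s.card → q s = 0) ∧
          ∀ u : Fin r → Fin 2,
            ((List.ofFn fun i => XP N n (p i) (x i) (z i) ^ (u i : ℕ)).prod).mulVec
                (Pi.single m 1) =
              (omN N) ^ (∑ s ∈ Finset.univ.powerset.filter
                    (fun s : Finset (Fin r) => s.Nonempty),
                  q s * 2 ^ (s.card - 1) * ∏ j ∈ s, ((u j : ℕ) : ℤ)) •
                (Pi.single (fun j => m j + ((∑ i, (u i : ℕ) * (x i j).toNat : ℕ) : Fin 2)) 1 :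
                  (Fin n → Fin 2) → ℂ) := by
  classical
  have hact : ∀ u : Fin r → Fin 2,
      ((List.ofFn fun i => XP N n (p i) (x i) (z i) ^ (u i : ℕ)).prod).mulVec (Pi.single m 1)
        = omN N ^ (Phi p x z m (List.finRange r) u) •
          (Pi.single (fun j => m j + ((∑ i, (u i : ℕ) * (x i j).toNat : ℕ) : Fin 2)) 1 :
            (Fin n → Fin 2) → ℂ) := by
    intro u
    have hstate : Sstate x m (List.finRange r) u
        = fun j => m j + ((∑ i, (u i : ℕ) * (x i j).toNat : ℕ) : Fin 2) := by
      funext j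
      simp only [Sstate]
      rw [Fin.sum_univ_def]
    rw [List.ofFn_eq_map, prod_mulVec N n r p x z hx m u (List.finRange r), hstate]
  obtain ⟨q, hq⟩ := Gq_form (Phi_mem p x z hx m (List.finRange r))
  have hq' : ∀ u : Fin r → Fin 2, Phi p x z m (List.finRange r) u
      = ∑ s ∈ Finset.univ.powerset.filter (fun s : Finset (Fin r) => s.Nonempty),
          q s * 2 ^ (s.card - 1) * ∏ j ∈ s, ((u j : ℕ) : ℤ) := hq
  constructor
  · exact ⟨q, fun u => by rw [hact u, hq' u]⟩
  · intro t ht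
    have hN0 : N ≠ 0 := by omega
    refine ⟨fun s => if s.card ≤ t + 1 then q s else 0,
      fun s hs => if_neg (by omega), fun u => ?_⟩
    rw [hact u, hq' u]
    have hdvd : (2 * (N:ℤ)) ∣
        ((∑ s ∈ Finset.univ.powerset.filter (fun s : Finset (Fin r) => s.Nonempty),
            q s * 2 ^ (s.card - 1) * ∏ j ∈ s, ((u j : ℕ) : ℤ))
          - ∑ s ∈ Finset.univ.powerset.filter (fun s : Finset (Fin r) => s.Nonempty),
            (if s.card ≤ t + 1 then q s else 0) * 2 ^ (s.card - 1) * ∏ j ∈ s, ((u j : ℕ) : ℤ)) := by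
      rw [← Finset.sum_sub_distrib]
      apply Finset.dvd_sum
      intro s hs
      by_cases hc : s.card ≤ t + 1
      · rw [if_pos hc, sub_self]
        exact dvd_zero _
      · rw [if_neg hc, zero_mul, zero_mul, sub_zero]
        have h2N : (2 * (N:ℤ)) = 2 ^ (t + 1) := by
          rw [ht]; push_cast; rw [pow_succ']
        rw [h2N]
        exact ((pow_dvd_pow (2:ℤ) (by omega : t + 1 ≤ s.card - 1)).mul_left (q s)).mul_right _
    obtain ⟨d, hd⟩ := hdvd
    have hsum : (∑ s ∈ Finset.univ.powerset.filter (fun s : Finset (Fin r) => s.Nonempty),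
            q s * 2 ^ (s.card - 1) * ∏ j ∈ s, ((u j : ℕ) : ℤ))
        = (∑ s ∈ Finset.univ.powerset.filter (fun s : Finset (Fin r) => s.Nonempty),
            (if s.card ≤ t + 1 then q s else 0) * 2 ^ (s.card - 1) * ∏ j ∈ s, ((u j : ℕ) : ℤ))
          + 2 * (N:ℤ) * d := by linarith
    rw [hsum, zpow_add₀ (omN_ne_zero N), _root_.zpow_mul, omN_pow_2N hN0, _root_.one_zpow, mul_one]
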